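/- The set of fixed points of Ψ^{H,T}, i.e. {(K*, P*, τ*) ∈ 𝔻^T : (K*, P*, τ*) = Ψ^{H,T}(K*, P*, τ*)}, is nonempty and forms a complete lattice in 𝔻^T under the componentwise order; in particular there exist a greatest solution (K^↑, P^↑, τ^↑) and a least solution (K^↓, P^↓, τ^↓) with (K^↓, P^↓, τ^↓) ≤ (K^↑, P^↑, τ^↑). -/

import Mathlib

open MeasureTheory

namespace Paper

open Classical in
/-- real-valued indicator of a proposition -/
noncomputable def indR (p : Prop) : ℝ := if p then 1 else 0

open Classical in
/-- boolean indicator of a proposition -/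
noncomputable def indB (p : Prop) : Bool := if p then true else false

/-- The atom of the σ-algebra `m` containing the point `ω`:
the intersection of all `m`-measurable sets containing `ω`. -/
def atomOf {Ω : Type*} (m : MeasurableSpace Ω) (ω : Ω) : Set Ω :=
  ⋂₀ {s : Set Ω | MeasurableSet[m] s ∧ ω ∈ s}

/-- The set `S`, with the order induced from the ambient preorder, is a nonempty complete
lattice: it has a greatest and a least element and every subset of `S` has a least upper
bound and a greatest lower bound within `S`. -/
def LatticeStructure {X : Type*} [Preorder X] (S : Set X) : Prop :=
  S.Nonempty ∧
  (∃ top ∈ S, ∀ z ∈ S, z ≤ top) ∧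
  (∃ bot ∈ S, ∀ z ∈ S, bot ≤ z) ∧
  (∀ A ⊆ S,
    (∃ u ∈ S, (∀ a ∈ A, a ≤ u) ∧ ∀ w ∈ S, (∀ a ∈ A, a ≤ w) → u ≤ w) ∧
    (∃ v ∈ S, (∀ a ∈ A, v ≤ a) ∧ ∀ w ∈ S, (∀ a ∈ A, w ≤ a) → w ≤ v))

/-- The space of triples `(K, P, τ)`: capital process, survival-probability process,
default-time vector, with the componentwise (pointwise) order. -/
abbrev Tri (Ω : Type*) (n ℓ : ℕ) :=
  (Fin (ℓ+1) → Ω → Fin n → ℝ) × (Fin (ℓ+1) → Ω → Fin n → ℝ) × (Fin n → Ω → ℝ)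

/-- Data of the single-maturity interbank model. -/
structure SM (Ω : Type*) (n ℓ : ℕ) where
  /-- maturity -/
  T : ℝ
  /-- times `0 = t 0 < t 1 < ... < t ℓ = T` -/
  t : Fin (ℓ+1) → ℝ
  /-- external asset process -/
  x : Fin (ℓ+1) → Ω → Fin n → ℝ
  /-- interbank liabilities -/
  L : Fin n → Fin n → ℝ
  /-- external liabilities -/
  L0 : Fin n → ℝ
  /-- recovery rate -/
  β : ℝ
  /-- risk-free rate -/
  r : ℝ

namespace SM

variable {Ω : Type*} {n ℓ : ℕ}

/-- total liabilities `p̄_i` -/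
noncomputable def pbar (M : SM Ω n ℓ) (i : Fin n) : ℝ := (∑ j, M.L i j) + M.L0 i

/-- discount factor `e^{-r (T - t l)}` -/
noncomputable def disc (M : SM Ω n ℓ) (l : Fin (ℓ+1)) : ℝ :=
  Real.exp (-(M.r * (M.T - M.t l)))

/-- the capital component `Ψ^T_K` of the clearing map -/
noncomputable def ΨK (M : SM Ω n ℓ) (l : Fin (ℓ+1)) (Pt : Ω → Fin n → ℝ)
    (ω : Ω) (i : Fin n) : ℝ :=
  M.x l ω i + M.disc l * (∑ j, M.L j i * (M.β + (1 - M.β) * Pt ω j))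
    - M.disc l * M.pbar i

/-- the default-time component `Ψ^T_τ` of the clearing map: the first time `t l` at which
the capital of bank `i` is negative, and `T + 1` if the capital stays nonnegative -/
noncomputable def Ψτ (M : SM Ω n ℓ) (K : Fin (ℓ+1) → Ω → Fin n → ℝ)
    (i : Fin n) (ω : Ω) : ℝ :=
  sInf (insert (M.T + 1) ((fun l => M.t l) '' {l : Fin (ℓ+1) | K l ω i < 0}))

/-- the survival-probability component `Ψ^T_P` of the clearing map:
`ℙ(τ_i > T | 𝓕 l)` -/
noncomputable def ΨP [MeasurableSpace Ω] (M : SM Ω n ℓ)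
    (𝓕 : Fin (ℓ+1) → MeasurableSpace Ω) (μ : Measure Ω)
    (τ : Fin n → Ω → ℝ) (l : Fin (ℓ+1)) (ω : Ω) (i : Fin n) : ℝ :=
  (μ[fun ω' => indR (M.T < τ i ω') | 𝓕 l]) ω

/-- membership in the domain `𝔻^T`: adaptedness, the balance-sheet bounds on `K`,
`P` valued in `[0,1]`, and `τ` valued in `{t_0, ..., t_ℓ, T+1}` -/
def memD [MeasurableSpace Ω] (M : SM Ω n ℓ) (𝓕 : Fin (ℓ+1) → MeasurableSpace Ω)
    (K P : Fin (ℓ+1) → Ω → Fin n → ℝ) (τ : Fin n → Ω → ℝ) : Prop :=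
  (∀ l i, Measurable[𝓕 l] fun ω => K l ω i) ∧
  (∀ l i, Measurable[𝓕 l] fun ω => P l ω i) ∧
  (∀ l ω i, M.x l ω i - M.disc l * M.pbar i ≤ K l ω i) ∧
  (∀ l ω i, K l ω i ≤ M.x l ω i + M.disc l * ((∑ j, M.L j i) - M.pbar i)) ∧
  (∀ l ω i, 0 ≤ P l ω i ∧ P l ω i ≤ 1) ∧
  (∀ i ω, (∃ l, τ i ω = M.t l) ∨ τ i ω = M.T + 1)

/-- the clearing map `Ψ^T` -/
noncomputable def Ψmap [MeasurableSpace Ω] (M : SM Ω n ℓ)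
    (𝓕 : Fin (ℓ+1) → MeasurableSpace Ω) (μ : Measure Ω) (z : Tri Ω n ℓ) : Tri Ω n ℓ :=
  (fun l ω i => M.ΨK l (z.2.1 l) ω i,
   fun l ω i => M.ΨP 𝓕 μ z.2.2 l ω i,
   fun i ω => M.Ψτ z.1 i ω)

/-- the set of clearing solutions: fixed points of `Ψ^T` in `𝔻^T` -/
def clearingSet [MeasurableSpace Ω] (M : SM Ω n ℓ)
    (𝓕 : Fin (ℓ+1) → MeasurableSpace Ω) (μ : Measure Ω) : Set (Tri Ω n ℓ) :=
  {z | M.memD 𝓕 z.1 z.2.1 z.2.2 ∧ M.Ψmap 𝓕 μ z = z}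

/-- Standing assumptions of the single-maturity model. -/
structure Valid [MeasurableSpace Ω] (M : SM Ω n ℓ)
    (𝓕 : Fin (ℓ+1) → MeasurableSpace Ω) (μ : Measure Ω) : Prop where
  hn : 1 ≤ n
  hTop : (inferInstance : MeasurableSpace Ω) = ⊤
  hprob : IsProbabilityMeasure μ
  hpos : ∀ ω : Ω, 0 < μ {ω}
  hmono : Monotone 𝓕
  h0 : 𝓕 0 = ⊥
  hlast : 𝓕 (Fin.last ℓ) = (inferInstance : MeasurableSpace Ω)
  ht : StrictMono M.t
  ht0 : M.t 0 = 0
  htT : M.t (Fin.last ℓ) = M.T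
  hx : ∀ l i, Measurable[𝓕 l] fun ω => M.x l ω i
  hx0 : ∀ l ω i, 0 ≤ M.x l ω i
  hL : ∀ i j, 0 ≤ M.L i j
  hLd : ∀ i, M.L i i = 0
  hL0 : ∀ i, 0 ≤ M.L0 i
  hβ0 : 0 ≤ M.β
  hβ1 : M.β ≤ 1
  hr : 0 ≤ M.r

end SM

namespace SM

/-- the historical-price-accounting survival component `Ψ^{H,T}_P`: the indicator `1{τ_i > t_l}` -/
noncomputable def ΨPH (M : SM Ω n ℓ) (τ : Fin n → Ω → ℝ) (l : Fin (ℓ+1))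
    (ω : Ω) (i : Fin n) : ℝ :=
  indR (M.t l < τ i ω)

/-- the historical price accounting clearing map `Ψ^{H,T}` -/
noncomputable def ΨmapH (M : SM Ω n ℓ) (z : Tri Ω n ℓ) : Tri Ω n ℓ :=
  (fun l ω i => M.ΨK l (z.2.1 l) ω i,
   fun l ω i => M.ΨPH z.2.2 l ω i,
   fun i ω => M.Ψτ z.1 i ω)

/-- the set of historical price accounting clearing solutions: fixed points of `Ψ^{H,T}` in `𝔻^T` -/
def clearingSetH [MeasurableSpace Ω] (M : SM Ω n ℓ)
    (𝓕 : Fin (ℓ+1) → MeasurableSpace Ω) : Set (Tri Ω n ℓ) :=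
  {z | M.memD 𝓕 z.1 z.2.1 z.2.2 ∧ M.ΨmapH z = z}

end SM


/-! ### Auxiliary lemmas -/

section Atoms
variable {Ω : Type*} [Finite Ω] {m : MeasurableSpace Ω}

omit [Finite Ω] in
lemma mem_atomOf_self (m : MeasurableSpace Ω) (ω : Ω) : ω ∈ atomOf m ω :=
  Set.mem_sInter.2 fun _ hs => hs.2

lemma atomOf_measurableSet (m : MeasurableSpace Ω) (ω : Ω) :
    MeasurableSet[m] (atomOf m ω) :=
  MeasurableSet.sInter (Set.to_countable _) fun _ hs => hs.1

omit [Finite Ω] in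
lemma atomOf_subset {s : Set Ω} (hs : MeasurableSet[m] s) {ω : Ω} (hω : ω ∈ s) :
    atomOf m ω ⊆ s :=
  Set.sInter_subset_of_mem ⟨hs, hω⟩

omit [Finite Ω] in
lemma mem_atomOf_symm {ω ω' : Ω} (h : ω' ∈ atomOf m ω) : ω ∈ atomOf m ω' := by
  by_contra hc
  simp only [atomOf, Set.mem_sInter, Set.mem_setOf_eq, not_forall] at hc
  obtain ⟨s, ⟨hsm, hω'⟩, hωs⟩ := hc
  exact (atomOf_subset hsm.compl hωs h) hω'

omit [Finite Ω] in
lemma mem_iff_of_atomOf {s : Set Ω} (hs : MeasurableSet[m] s) {ω ω' : Ω}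
    (h : ω' ∈ atomOf m ω) : ω' ∈ s ↔ ω ∈ s :=
  ⟨fun hω' => atomOf_subset hs hω' (mem_atomOf_symm h),
   fun hω => atomOf_subset hs hω h⟩

lemma measurableSet_iff_atomOf {s : Set Ω} :
    MeasurableSet[m] s ↔ ∀ ω ∈ s, atomOf m ω ⊆ s := by
  constructor
  · exact fun hs ω hω => atomOf_subset hs hω
  · intro h
    have hs : s = ⋃ ω ∈ s, atomOf m ω := by
      ext ω'
      constructor
      · exact fun hω' => Set.mem_biUnion hω' (mem_atomOf_self m ω')
      · intro hω'
        simp only [Set.mem_iUnion] at hω'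
        obtain ⟨ω, hω, hmem⟩ := hω'
        exact h ω hω hmem
    rw [hs]
    exact MeasurableSet.biUnion (Set.to_countable _) fun ω _ => atomOf_measurableSet m ω

lemma measurable_iff_atomOf {f : Ω → ℝ} :
    Measurable[m] f ↔ ∀ ω ω', ω' ∈ atomOf m ω → f ω' = f ω := by
  constructor
  · intro hf ω ω' h
    exact atomOf_subset (hf (measurableSet_singleton (f ω))) rfl h
  · intro h s _
    rw [measurableSet_iff_atomOf]
    intro ω hω ω' hω'
    simpa only [Set.mem_preimage, h ω ω' hω'] using hω

end Atoms

lemma lt_csInf_iff_finite {c : ℝ} {s : Set ℝ} (hfin : s.Finite) (hne : s.Nonempty) :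
    c < sInf s ↔ ∀ x ∈ s, c < x :=
  ⟨fun h x hx => lt_of_lt_of_le h (csInf_le hfin.bddBelow hx),
   fun h => h _ (hne.csInf_mem hfin)⟩

lemma Tri.le_iff {Ω : Type*} {n ℓ : ℕ} {z w : Tri Ω n ℓ} :
    z ≤ w ↔ (∀ l ω i, z.1 l ω i ≤ w.1 l ω i) ∧ (∀ l ω i, z.2.1 l ω i ≤ w.2.1 l ω i) ∧
      (∀ i ω, z.2.2 i ω ≤ w.2.2 i ω) := by
  simp [Prod.le_def, Pi.le_def]

namespace SM

variable {Ω : Type*} [Fintype Ω] [MeasurableSpace Ω] {n ℓ : ℕ}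
variable (M : SM Ω n ℓ) (𝓕 : Fin (ℓ+1) → MeasurableSpace Ω) (μ : Measure Ω)

/-- the set of admissible values of default times -/
def tauSet : Set ℝ := insert (M.T + 1) (Set.range M.t)

lemma tauSet_finite : M.tauSet.Finite := (Set.finite_range _).insert _

lemma mem_tauSet_iff {x : ℝ} : x ∈ M.tauSet ↔ (∃ l, x = M.t l) ∨ x = M.T + 1 := by
  simp only [tauSet, Set.mem_insert_iff, Set.mem_range]
  constructor
  · rintro (h | ⟨l, rfl⟩)
    · exact Or.inr h
    · exact Or.inl ⟨l, rfl⟩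
  · rintro (⟨l, rfl⟩ | h)
    · exact Or.inr ⟨l, rfl⟩
    · exact Or.inl h

lemma disc_pos (l : Fin (ℓ+1)) : 0 < M.disc l := Real.exp_pos _

variable {M 𝓕 μ}

lemma Valid.t_le_T (hM : M.Valid 𝓕 μ) (l : Fin (ℓ+1)) : M.t l ≤ M.T :=
  hM.htT ▸ hM.ht.monotone (Fin.le_last l)

lemma Valid.t_lt_Tadd (hM : M.Valid 𝓕 μ) (l : Fin (ℓ+1)) : M.t l < M.T + 1 :=
  lt_of_le_of_lt (hM.t_le_T l) (lt_add_one _)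

lemma Valid.tauSet_lb (hM : M.Valid 𝓕 μ) {x : ℝ} (hx : x ∈ M.tauSet) : M.t 0 ≤ x := by
  rcases (mem_tauSet_iff M).1 hx with ⟨l, rfl⟩ | rfl
  · exact hM.ht.monotone (Fin.zero_le l)
  · exact le_of_lt (hM.t_lt_Tadd 0)

lemma Valid.tauSet_ub (hM : M.Valid 𝓕 μ) {x : ℝ} (hx : x ∈ M.tauSet) : x ≤ M.T + 1 := by
  rcases (mem_tauSet_iff M).1 hx with ⟨l, rfl⟩ | rfl
  · exact le_of_lt (hM.t_lt_Tadd l)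
  · exact le_rfl

variable (M 𝓕)

/-- membership in the extended domain: `memD` plus the stopping-time property of `τ` -/
def memD' (z : Tri Ω n ℓ) : Prop :=
  M.memD 𝓕 z.1 z.2.1 z.2.2 ∧ ∀ i l, MeasurableSet[𝓕 l] {ω | M.t l < z.2.2 i ω}

variable {M 𝓕}

/-! #### Properties of `Ψτ` -/

lemma Ψτ_mem_tauSet (K : Fin (ℓ+1) → Ω → Fin n → ℝ) (i : Fin n) (ω : Ω) :
    M.Ψτ K i ω ∈ M.tauSet := by
  have hsub : insert (M.T + 1) ((fun l => M.t l) '' {l : Fin (ℓ+1) | K l ω i < 0}) ⊆ M.tauSet :=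
    Set.insert_subset_insert ((Set.image_subset_range _ _).trans le_rfl)
  exact hsub <| Set.Nonempty.csInf_mem ⟨_, Set.mem_insert _ _⟩ ((tauSet_finite M).subset hsub)

lemma lt_Ψτ_iff (hM : M.Valid 𝓕 μ) (K : Fin (ℓ+1) → Ω → Fin n → ℝ) (i : Fin n) (ω : Ω)
    (l : Fin (ℓ+1)) :
    M.t l < M.Ψτ K i ω ↔ ∀ m, K m ω i < 0 → M.t l < M.t m := by
  unfold Ψτ
  rw [lt_csInf_iff_finite ((tauSet_finite M).subset
      (Set.insert_subset_insert (Set.image_subset_range _ _)))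
    ⟨_, Set.mem_insert _ _⟩]
  constructor
  · intro h m hm
    exact h _ (Set.mem_insert_of_mem _ ⟨m, hm, rfl⟩)
  · rintro h x (rfl | ⟨m, hm, rfl⟩)
    · exact hM.t_lt_Tadd l
    · exact h m hm

lemma Ψτ_stopping (hM : M.Valid 𝓕 μ) {K : Fin (ℓ+1) → Ω → Fin n → ℝ}
    (hK : ∀ l i, Measurable[𝓕 l] fun ω => K l ω i) (i : Fin n) (l : Fin (ℓ+1)) :
    MeasurableSet[𝓕 l] {ω | M.t l < M.Ψτ K i ω} := by
  rw [measurableSet_iff_atomOf]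
  intro ω hω ω' hω'
  simp only [Set.mem_setOf_eq, lt_Ψτ_iff hM] at hω ⊢
  intro m hm
  by_contra hlt
  push_neg at hlt
  have hml : m ≤ l := (hM.ht.le_iff_le).1 hlt
  have heq : K m ω' i = K m ω i :=
    measurable_iff_atomOf.1 ((hK m i).mono (hM.hmono hml) le_rfl) ω ω' hω'
  exact absurd (hω m (heq ▸ hm)) (not_lt.2 hlt)

lemma Ψτ_mono {K K' : Fin (ℓ+1) → Ω → Fin n → ℝ} (h : ∀ l ω i, K l ω i ≤ K' l ω i)
    (i : Fin n) (ω : Ω) : M.Ψτ K i ω ≤ M.Ψτ K' i ω := by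
  refine csInf_le_csInf ?_ ⟨_, Set.mem_insert _ _⟩
    (Set.insert_subset_insert (Set.image_mono fun m hm => lt_of_le_of_lt (h m ω i) hm))
  exact Set.Finite.bddBelow ((tauSet_finite M).subset
    (Set.insert_subset_insert (Set.image_subset_range _ _)))

/-! #### Properties of `ΨK` and `ΨPH` -/

lemma ΨK_lb (hM : M.Valid 𝓕 μ) (Pt : Ω → Fin n → ℝ)
    (hP : ∀ ω j, 0 ≤ Pt ω j ∧ Pt ω j ≤ 1) (l : Fin (ℓ+1)) (ω : Ω) (i : Fin n) :
    M.x l ω i - M.disc l * M.pbar i ≤ M.ΨK l Pt ω i := by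
  have hd : (0:ℝ) ≤ M.disc l := (disc_pos M l).le
  have h0 : 0 ≤ M.disc l * ∑ j, M.L j i * (M.β + (1 - M.β) * Pt ω j) := by
    refine mul_nonneg hd (Finset.sum_nonneg fun j _ => mul_nonneg (hM.hL j i) ?_)
    have := (hP ω j).1
    nlinarith [hM.hβ0, hM.hβ1]
  unfold ΨK
  linarith

lemma ΨK_ub (hM : M.Valid 𝓕 μ) (Pt : Ω → Fin n → ℝ)
    (hP : ∀ ω j, 0 ≤ Pt ω j ∧ Pt ω j ≤ 1) (l : Fin (ℓ+1)) (ω : Ω) (i : Fin n) :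
    M.ΨK l Pt ω i ≤ M.x l ω i + M.disc l * ((∑ j, M.L j i) - M.pbar i) := by
  have hd : (0:ℝ) ≤ M.disc l := (disc_pos M l).le
  have hsum : (∑ j, M.L j i * (M.β + (1 - M.β) * Pt ω j)) ≤ ∑ j, M.L j i := by
    refine Finset.sum_le_sum fun j _ => ?_
    have h1 := (hP ω j).1
    have h2 := (hP ω j).2
    have he : M.β + (1 - M.β) * Pt ω j ≤ 1 := by nlinarith [hM.hβ1]
    exact mul_le_of_le_one_right (hM.hL j i) he
  have h2 := mul_le_mul_of_nonneg_left hsum hd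
  have h3 : M.disc l * ((∑ j, M.L j i) - M.pbar i)
      = M.disc l * (∑ j, M.L j i) - M.disc l * M.pbar i := mul_sub _ _ _
  unfold ΨK
  linarith

lemma ΨK_measurable (hM : M.Valid 𝓕 μ) (Pt : Ω → Fin n → ℝ)
    (hPm : ∀ j, Measurable[𝓕 l'] fun ω => Pt ω j) (l : Fin (ℓ+1)) (i : Fin n)
    (hll : l = l') :
    Measurable[𝓕 l] fun ω => M.ΨK l Pt ω i := by
  subst hll
  rw [measurable_iff_atomOf]
  intro ω ω' h
  have hx : M.x l ω' i = M.x l ω i := measurable_iff_atomOf.1 (hM.hx l i) ω ω' h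
  have hPe : ∀ j, Pt ω' j = Pt ω j := fun j => measurable_iff_atomOf.1 (hPm j) ω ω' h
  unfold ΨK
  rw [hx, Finset.sum_congr rfl fun j _ => by rw [hPe j]]

lemma ΨPH_bounds (τ : Fin n → Ω → ℝ) (l : Fin (ℓ+1)) (ω : Ω) (i : Fin n) :
    0 ≤ M.ΨPH τ l ω i ∧ M.ΨPH τ l ω i ≤ 1 := by
  unfold ΨPH indR
  split <;> norm_num

lemma ΨPH_measurable {τ : Fin n → Ω → ℝ}
    (hτ : ∀ i l, MeasurableSet[𝓕 l] {ω | M.t l < τ i ω}) (l : Fin (ℓ+1)) (i : Fin n) :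
    Measurable[𝓕 l] fun ω => M.ΨPH τ l ω i := by
  rw [measurable_iff_atomOf]
  intro ω ω' h
  have hiff : M.t l < τ i ω' ↔ M.t l < τ i ω := mem_iff_of_atomOf (hτ i l) h
  unfold ΨPH indR
  exact if_congr hiff rfl rfl

/-! #### `ΨmapH` preserves the domain and is monotone -/

lemma ΨmapH_memD' (hM : M.Valid 𝓕 μ) {z : Tri Ω n ℓ} (hz : memD' M 𝓕 z) :
    memD' M 𝓕 (M.ΨmapH z) := by
  obtain ⟨⟨hKm, hPm, hKl, hKu, hPb, hτv⟩, hst⟩ := hz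
  have hPb' : ∀ (l : Fin (ℓ+1)) ω j, 0 ≤ z.2.1 l ω j ∧ z.2.1 l ω j ≤ 1 := hPb
  refine ⟨⟨?_, ?_, ?_, ?_, ?_, ?_⟩, ?_⟩
  · exact fun l i => ΨK_measurable hM (z.2.1 l) (hPm l) l i rfl
  · exact fun l i => ΨPH_measurable hst l i
  · exact fun l ω i => ΨK_lb hM (z.2.1 l) (fun ω j => hPb' l ω j) l ω i
  · exact fun l ω i => ΨK_ub hM (z.2.1 l) (fun ω j => hPb' l ω j) l ω i
  · exact fun l ω i => ΨPH_bounds (z.2.2) l ω i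
  · exact fun i ω => (mem_tauSet_iff M).1 (Ψτ_mem_tauSet z.1 i ω)
  · exact fun i l => Ψτ_stopping hM hKm i l

lemma ΨmapH_mono (hM : M.Valid 𝓕 μ) {z w : Tri Ω n ℓ} (h : z ≤ w) :
    M.ΨmapH z ≤ M.ΨmapH w := by
  obtain ⟨hK, hP, hτ⟩ := Tri.le_iff.1 h
  rw [Tri.le_iff]
  refine ⟨?_, ?_, ?_⟩
  · intro l ω i
    show M.ΨK l (z.2.1 l) ω i ≤ M.ΨK l (w.2.1 l) ω i
    have hd : (0:ℝ) ≤ M.disc l := (disc_pos M l).le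
    have hsum : (∑ j, M.L j i * (M.β + (1 - M.β) * z.2.1 l ω j))
        ≤ ∑ j, M.L j i * (M.β + (1 - M.β) * w.2.1 l ω j) := by
      refine Finset.sum_le_sum fun j _ => mul_le_mul_of_nonneg_left ?_ (hM.hL j i)
      have := hP l ω j
      nlinarith [hM.hβ1]
    have h2 := mul_le_mul_of_nonneg_left hsum hd
    unfold ΨK
    linarith
  · intro l ω i
    show M.ΨPH z.2.2 l ω i ≤ M.ΨPH w.2.2 l ω i
    unfold ΨPH indR
    split_ifs with h1 h2
    · exact le_refl 1
    · exact absurd (lt_of_lt_of_le h1 (hτ i ω)) h2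
    · norm_num
    · exact le_refl 0
  · intro i ω
    exact Ψτ_mono (fun l ω i => hK l ω i) i ω

/-! #### The pointwise infimum construction on the domain -/

variable (M) in
/-- pointwise infimum of a family of triples, capped by the top of the domain -/
noncomputable def infD (A : Set (Tri Ω n ℓ)) : Tri Ω n ℓ :=
  (fun l ω i => sInf (insert (M.x l ω i + M.disc l * ((∑ j, M.L j i) - M.pbar i))
      ((fun z : Tri Ω n ℓ => z.1 l ω i) '' A)),
   fun l ω i => sInf (insert 1 ((fun z : Tri Ω n ℓ => z.2.1 l ω i) '' A)),
   fun i ω => sInf (insert (M.T + 1) ((fun z : Tri Ω n ℓ => z.2.2 i ω) '' A)))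

lemma loB_le_hiB (hM : M.Valid 𝓕 μ) (l : Fin (ℓ+1)) (ω : Ω) (i : Fin n) :
    M.x l ω i - M.disc l * M.pbar i
      ≤ M.x l ω i + M.disc l * ((∑ j, M.L j i) - M.pbar i) := by
  have h0 : 0 ≤ M.disc l * ∑ j, M.L j i :=
    mul_nonneg (disc_pos M l).le (Finset.sum_nonneg fun j _ => hM.hL j i)
  have h3 : M.disc l * ((∑ j, M.L j i) - M.pbar i)
      = M.disc l * (∑ j, M.L j i) - M.disc l * M.pbar i := mul_sub _ _ _
  linarith

section infD
variable (hM : M.Valid 𝓕 μ) {A : Set (Tri Ω n ℓ)} (hA : ∀ z ∈ A, memD' M 𝓕 z)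
include hM hA

lemma bddK (l : Fin (ℓ+1)) (ω : Ω) (i : Fin n) :
    BddBelow (insert (M.x l ω i + M.disc l * ((∑ j, M.L j i) - M.pbar i))
      ((fun z : Tri Ω n ℓ => z.1 l ω i) '' A)) := by
  refine ⟨M.x l ω i - M.disc l * M.pbar i, ?_⟩
  rintro x (rfl | ⟨z, hz, rfl⟩)
  · exact loB_le_hiB hM l ω i
  · exact (hA z hz).1.2.2.1 l ω i

lemma bddP (l : Fin (ℓ+1)) (ω : Ω) (i : Fin n) :
    BddBelow (insert (1:ℝ) ((fun z : Tri Ω n ℓ => z.2.1 l ω i) '' A)) := by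
  refine ⟨0, ?_⟩
  rintro x (rfl | ⟨z, hz, rfl⟩)
  · norm_num
  · exact ((hA z hz).1.2.2.2.2.1 l ω i).1

lemma tauSet_sub (i : Fin n) (ω : Ω) :
    insert (M.T + 1) ((fun z : Tri Ω n ℓ => z.2.2 i ω) '' A) ⊆ M.tauSet := by
  rintro x (rfl | ⟨z, hz, rfl⟩)
  · exact Set.mem_insert _ _
  · exact (mem_tauSet_iff M).2 ((hA z hz).1.2.2.2.2.2 i ω)

lemma infD_le {a : Tri Ω n ℓ} (ha : a ∈ A) : infD M A ≤ a := by
  rw [Tri.le_iff]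
  refine ⟨fun l ω i => ?_, fun l ω i => ?_, fun i ω => ?_⟩
  · exact csInf_le (bddK hM hA l ω i) (Set.mem_insert_of_mem _ ⟨a, ha, rfl⟩)
  · exact csInf_le (bddP hM hA l ω i) (Set.mem_insert_of_mem _ ⟨a, ha, rfl⟩)
  · exact csInf_le (((tauSet_finite M).subset (tauSet_sub hM hA i ω)).bddBelow)
      (Set.mem_insert_of_mem _ ⟨a, ha, rfl⟩)

lemma le_infD {w : Tri Ω n ℓ} (hw : memD' M 𝓕 w) (h : ∀ z ∈ A, w ≤ z) :
    w ≤ infD M A := by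
  rw [Tri.le_iff]
  refine ⟨fun l ω i => ?_, fun l ω i => ?_, fun i ω => ?_⟩
  · refine le_csInf ⟨_, Set.mem_insert _ _⟩ ?_
    rintro x (rfl | ⟨z, hz, rfl⟩)
    · exact hw.1.2.2.2.1 l ω i
    · exact (Tri.le_iff.1 (h z hz)).1 l ω i
  · refine le_csInf ⟨_, Set.mem_insert _ _⟩ ?_
    rintro x (rfl | ⟨z, hz, rfl⟩)
    · exact (hw.1.2.2.2.2.1 l ω i).2
    · exact (Tri.le_iff.1 (h z hz)).2.1 l ω i
  · refine le_csInf ⟨_, Set.mem_insert _ _⟩ ?_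
    rintro x (rfl | ⟨z, hz, rfl⟩)
    · exact le_trans (hM.tauSet_ub ((mem_tauSet_iff M).2 (hw.1.2.2.2.2.2 i ω))) le_rfl
    · exact (Tri.le_iff.1 (h z hz)).2.2 i ω

lemma infD_memD' : memD' M 𝓕 (infD M A) := by
  refine ⟨⟨?_, ?_, ?_, ?_, ?_, ?_⟩, ?_⟩
  · -- K adapted
    intro l i
    rw [measurable_iff_atomOf]
    intro ω ω' h
    have hx : M.x l ω' i = M.x l ω i := measurable_iff_atomOf.1 (hM.hx l i) ω ω' h
    show sInf _ = sInf _
    rw [hx, Set.image_congr fun z hz =>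
      measurable_iff_atomOf.1 ((hA z hz).1.1 l i) ω ω' h]
  · -- P adapted
    intro l i
    rw [measurable_iff_atomOf]
    intro ω ω' h
    show sInf _ = sInf _
    rw [Set.image_congr fun z hz =>
      measurable_iff_atomOf.1 ((hA z hz).1.2.1 l i) ω ω' h]
  · -- K lower bound
    intro l ω i
    refine le_csInf ⟨_, Set.mem_insert _ _⟩ ?_
    rintro x (rfl | ⟨z, hz, rfl⟩)
    · exact loB_le_hiB hM l ω i
    · exact (hA z hz).1.2.2.1 l ω i
  · -- K upper bound
    intro l ω i
    exact csInf_le (bddK hM hA l ω i) (Set.mem_insert _ _)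
  · -- P in [0,1]
    intro l ω i
    constructor
    · refine le_csInf ⟨_, Set.mem_insert _ _⟩ ?_
      rintro x (rfl | ⟨z, hz, rfl⟩)
      · norm_num
      · exact ((hA z hz).1.2.2.2.2.1 l ω i).1
    · exact csInf_le (bddP hM hA l ω i) (Set.mem_insert _ _)
  · -- τ values
    intro i ω
    refine (mem_tauSet_iff M).1 (tauSet_sub hM hA i ω ?_)
    exact Set.Nonempty.csInf_mem ⟨_, Set.mem_insert _ _⟩
      ((tauSet_finite M).subset (tauSet_sub hM hA i ω))
  · -- τ stopping times
    intro i l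
    rw [measurableSet_iff_atomOf]
    intro ω hω ω' hω'
    simp only [Set.mem_setOf_eq] at hω ⊢
    have hfin : ∀ ω0 : Ω,
        (insert (M.T + 1) ((fun z : Tri Ω n ℓ => z.2.2 i ω0) '' A)).Finite :=
      fun ω0 => (tauSet_finite M).subset (tauSet_sub hM hA i ω0)
    rw [show (infD M A).2.2 i ω' =
      sInf (insert (M.T + 1) ((fun z : Tri Ω n ℓ => z.2.2 i ω') '' A)) from rfl,
      lt_csInf_iff_finite (hfin ω') ⟨_, Set.mem_insert _ _⟩]
    rw [show (infD M A).2.2 i ω =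
      sInf (insert (M.T + 1) ((fun z : Tri Ω n ℓ => z.2.2 i ω) '' A)) from rfl,
      lt_csInf_iff_finite (hfin ω) ⟨_, Set.mem_insert _ _⟩] at hω
    rintro x (rfl | ⟨z, hz, rfl⟩)
    · exact hM.t_lt_Tadd l
    · have hz' := hω _ (Set.mem_insert_of_mem _ ⟨z, hz, rfl⟩)
      exact (mem_iff_of_atomOf ((hA z hz).2 i l) hω').2 hz'

end infD

end SM

open SM in
/-- Proposition B.1: the set of fixed points of the historical price
accounting clearing map `Ψ^{H,T}` in `𝔻^T` is nonempty and forms a complete lattice under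
the componentwise order, with greatest and least solutions. -/
theorem hpa_clearing_lattice
    {Ω : Type*} [Fintype Ω] [MeasurableSpace Ω] {n ℓ : ℕ}
    (M : SM Ω n ℓ) (𝓕 : Fin (ℓ+1) → MeasurableSpace Ω) (μ : MeasureTheory.Measure Ω)
    (hM : M.Valid 𝓕 μ) :
    LatticeStructure (M.clearingSetH 𝓕) := by
  classical
  letI instInf : InfSet {z : Tri Ω n ℓ // SM.memD' M 𝓕 z} :=
    ⟨fun A => ⟨SM.infD M (Subtype.val '' A),
      SM.infD_memD' hM (by rintro z ⟨w, hw, rfl⟩; exact w.2)⟩⟩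
  letI instCL : CompleteLattice {z : Tri Ω n ℓ // SM.memD' M 𝓕 z} := by
    refine completeLatticeOfInf _ fun A => ⟨?_, ?_⟩
    · intro a ha
      exact Subtype.coe_le_coe.1
        (SM.infD_le hM (by rintro z ⟨w, hw, rfl⟩; exact w.2) (Set.mem_image_of_mem _ ha))
    · intro w hw
      refine Subtype.coe_le_coe.1
        (SM.le_infD hM (by rintro z ⟨v, hv, rfl⟩; exact v.2) w.2 ?_)
      rintro z ⟨a, ha, rfl⟩
      exact Subtype.coe_le_coe.2 (hw ha)
  let Ψo : {z : Tri Ω n ℓ // SM.memD' M 𝓕 z} →o {z : Tri Ω n ℓ // SM.memD' M 𝓕 z} :=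
    ⟨fun z => ⟨M.ΨmapH z.val, SM.ΨmapH_memD' hM z.2⟩,
     fun z w h => Subtype.mk_le_mk.2 (SM.ΨmapH_mono hM (Subtype.coe_le_coe.2 h))⟩
  have hSiff : ∀ z : Tri Ω n ℓ, z ∈ M.clearingSetH 𝓕 ↔
      ∃ h : SM.memD' M 𝓕 z,
        (⟨z, h⟩ : {z : Tri Ω n ℓ // SM.memD' M 𝓕 z}) ∈ Function.fixedPoints ⇑Ψo := by
    intro z
    constructor
    · rintro ⟨hmem, hfix⟩
      have hτ : z.2.2 = fun i ω => M.Ψτ z.1 i ω :=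
        (congrArg (fun t : Tri Ω n ℓ => t.2.2) hfix).symm
      have hst : ∀ i l, MeasurableSet[𝓕 l] {ω | M.t l < z.2.2 i ω} := by
        intro i l
        rw [hτ]
        exact SM.Ψτ_stopping hM hmem.1 i l
      exact ⟨⟨hmem, hst⟩, Subtype.ext hfix⟩
    · rintro ⟨h, hfix⟩
      exact ⟨h.1, congrArg Subtype.val hfix⟩
  refine ⟨?_, ?_, ?_, ?_⟩
  · -- nonempty
    exact ⟨(⊥ : Function.fixedPoints ⇑Ψo).val.val,
      (hSiff _).2 ⟨(⊥ : Function.fixedPoints ⇑Ψo).val.2, (⊥ : Function.fixedPoints ⇑Ψo).2⟩⟩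
  · -- greatest element
    refine ⟨(⊤ : Function.fixedPoints ⇑Ψo).val.val,
      (hSiff _).2 ⟨(⊤ : Function.fixedPoints ⇑Ψo).val.2, (⊤ : Function.fixedPoints ⇑Ψo).2⟩, ?_⟩
    intro zz hz
    obtain ⟨h, hfix⟩ := (hSiff zz).1 hz
    exact Subtype.coe_le_coe.2 (Subtype.coe_le_coe.2
      (le_top (a := (⟨⟨zz, h⟩, hfix⟩ : Function.fixedPoints ⇑Ψo))))
  · -- least element
    refine ⟨(⊥ : Function.fixedPoints ⇑Ψo).val.val,
      (hSiff _).2 ⟨(⊥ : Function.fixedPoints ⇑Ψo).val.2, (⊥ : Function.fixedPoints ⇑Ψo).2⟩, ?_⟩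
    intro zz hz
    obtain ⟨h, hfix⟩ := (hSiff zz).1 hz
    exact Subtype.coe_le_coe.2 (Subtype.coe_le_coe.2
      (bot_le (a := (⟨⟨zz, h⟩, hfix⟩ : Function.fixedPoints ⇑Ψo))))
  · -- suprema and infima of subsets of the solution set
    intro A hA
    have lift : ∀ a ∈ A, ∃ x : Function.fixedPoints ⇑Ψo, x.val.val = a := by
      intro a ha
      obtain ⟨h, hfix⟩ := (hSiff a).1 (hA ha)
      exact ⟨⟨⟨a, h⟩, hfix⟩, rfl⟩
    constructor
    · -- least upper bound within the solution set
      refine ⟨(sSup {x : Function.fixedPoints ⇑Ψo | x.val.val ∈ A}).val.val,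
        (hSiff _).2 ⟨_, (sSup {x : Function.fixedPoints ⇑Ψo | x.val.val ∈ A}).2⟩, ?_, ?_⟩
      · intro a ha
        obtain ⟨x, hx⟩ := lift a ha
        have hle : x ≤ sSup {x : Function.fixedPoints ⇑Ψo | x.val.val ∈ A} :=
          le_sSup (by simp only [Set.mem_setOf_eq, hx]; exact ha)
        calc a = x.val.val := hx.symm
          _ ≤ _ := Subtype.coe_le_coe.2 (Subtype.coe_le_coe.2 hle)
      · intro w hw hub
        obtain ⟨h, hfix⟩ := (hSiff w).1 hw
        have hle : sSup {x : Function.fixedPoints ⇑Ψo | x.val.val ∈ A}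
            ≤ (⟨⟨w, h⟩, hfix⟩ : Function.fixedPoints ⇑Ψo) := by
          refine sSup_le fun x hx => ?_
          exact Subtype.coe_le_coe.1 (Subtype.coe_le_coe.1 (hub x.val.val hx))
        exact Subtype.coe_le_coe.2 (Subtype.coe_le_coe.2 hle)
    · -- greatest lower bound within the solution set
      refine ⟨(sInf {x : Function.fixedPoints ⇑Ψo | x.val.val ∈ A}).val.val,
        (hSiff _).2 ⟨_, (sInf {x : Function.fixedPoints ⇑Ψo | x.val.val ∈ A}).2⟩, ?_, ?_⟩
      · intro a ha
        obtain ⟨x, hx⟩ := lift a ha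
        have hle : sInf {x : Function.fixedPoints ⇑Ψo | x.val.val ∈ A} ≤ x :=
          sInf_le (by simp only [Set.mem_setOf_eq, hx]; exact ha)
        calc _ ≤ x.val.val := Subtype.coe_le_coe.2 (Subtype.coe_le_coe.2 hle)
          _ = a := hx
      · intro w hw hlb
        obtain ⟨h, hfix⟩ := (hSiff w).1 hw
        have hle : (⟨⟨w, h⟩, hfix⟩ : Function.fixedPoints ⇑Ψo)
            ≤ sInf {x : Function.fixedPoints ⇑Ψo | x.val.val ∈ A} := by
          refine le_sInf fun x hx => ?_
          exact Subtype.coe_le_coe.1 (Subtype.coe_le_coe.1 (hlb x.val.val hx))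
        exact Subtype.coe_le_coe.2 (Subtype.coe_le_coe.2 hle)

end Paper
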